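/- arXiv:1611.04415 — 4 statements merged into one kernel-verified Lean document; each statement's English description precedes it below -/
import Mathlib

section
/- For any matrix M in ℂ^{2n×2n}, the matrix M|_H := (1/2)(M + J M^H J), where J is the fundamental symplectic matrix, is the (unique) closest Hamiltonian matrix to M in the Frobenius norm; that is, M|_H is Hamiltonian and for every Hamiltonian matrix Q in ℂ^{2n×2n} one has ‖M − M|_H‖_F ≤ ‖M − Q‖_F, with equality only if Q = M|_H. -/
open Matrix

noncomputable def frobNorm {m k : Type*} [Fintype m] [Fintype k] (M : Matrix m k ℂ) : ℝ :=
  Real.sqrt (∑ i, ∑ j, ‖M i j‖ ^ 2)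

noncomputable def Jmat (n : ℕ) : Matrix (Fin n ⊕ Fin n) (Fin n ⊕ Fin n) ℂ :=
  Matrix.fromBlocks 0 1 (-1) 0

def IsHamiltonian {n : ℕ} (Q : Matrix (Fin n ⊕ Fin n) (Fin n ⊕ Fin n) ℂ) : Prop :=
  Q * Jmat n = (Q * Jmat n)ᴴ

/-- The projection of a matrix onto the set of Hamiltonian matrices. -/
noncomputable def hamProj {n : ℕ} (M : Matrix (Fin n ⊕ Fin n) (Fin n ⊕ Fin n) ℂ) :
    Matrix (Fin n ⊕ Fin n) (Fin n ⊕ Fin n) ℂ :=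
  (1 / 2 : ℂ) • (M + Jmat n * Mᴴ * Jmat n)

private lemma Jh (n : ℕ) : (Jmat n)ᴴ = - Jmat n := by
  simp only [Jmat, fromBlocks_conjTranspose, Matrix.fromBlocks_neg]
  norm_num

private lemma JJ (n : ℕ) : Jmat n * Jmat n = -1 := by
  rw [show (-1 : Matrix (Fin n ⊕ Fin n) (Fin n ⊕ Fin n) ℂ) = -(fromBlocks 1 0 0 1) by
    rw [fromBlocks_one]]
  simp only [Jmat, fromBlocks_multiply, Matrix.fromBlocks_neg]
  norm_num

private noncomputable def gsum {n : ℕ} (X : Matrix (Fin n ⊕ Fin n) (Fin n ⊕ Fin n) ℂ) : ℝ :=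
  ∑ i, ∑ j, ‖X i j‖ ^ 2

private lemma gsum_nonneg {n : ℕ} (X : Matrix (Fin n ⊕ Fin n) (Fin n ⊕ Fin n) ℂ) :
    0 ≤ gsum X :=
  Finset.sum_nonneg fun _ _ => Finset.sum_nonneg fun _ _ => sq_nonneg _

private lemma gsum_add {n : ℕ} (X Y : Matrix (Fin n ⊕ Fin n) (Fin n ⊕ Fin n) ℂ) :
    gsum (X + Y) = gsum X + gsum Y + 2 * (Matrix.trace (Xᴴ * Y)).re := by
  have htr : (Matrix.trace (Xᴴ * Y)).re = ∑ i, ∑ k, (star (X k i) * Y k i).re := by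
    simp only [Matrix.trace, Matrix.diag, Matrix.mul_apply, Matrix.conjTranspose_apply]
    rw [Complex.re_sum]
    refine Finset.sum_congr rfl fun i _ => ?_
    rw [Complex.re_sum]
  rw [htr, gsum, gsum, gsum]
  rw [Finset.sum_comm (s := Finset.univ) (t := Finset.univ)
    (f := fun i k => (star (X k i) * Y k i).re)]
  rw [Finset.mul_sum, ← Finset.sum_add_distrib, ← Finset.sum_add_distrib]
  refine Finset.sum_congr rfl fun i _ => ?_
  rw [Finset.mul_sum, ← Finset.sum_add_distrib, ← Finset.sum_add_distrib]
  refine Finset.sum_congr rfl fun j _ => ?_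
  have sqn : ∀ z : ℂ, ‖z‖ ^ 2 = z.re ^ 2 + z.im ^ 2 := by
    intro z
    rw [Complex.sq_norm, Complex.normSq_apply]
    ring
  have key : ∀ a b : ℂ, ‖a + b‖ ^ 2 = ‖a‖ ^ 2 + ‖b‖ ^ 2 + 2 * (star a * b).re := by
    intro a b
    simp only [sqn, Complex.add_re, Complex.add_im, Complex.star_def, Complex.mul_re,
      Complex.conj_re, Complex.conj_im]
    ring
  simpa using key (X i j) (Y i j)

private lemma cross_zero {n : ℕ} (S K : Matrix (Fin n ⊕ Fin n) (Fin n ⊕ Fin n) ℂ)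
    (hS : (S * Jmat n)ᴴ = -(S * Jmat n)) (hK : (K * Jmat n)ᴴ = K * Jmat n) :
    (Matrix.trace (Sᴴ * K)).re = 0 := by
  set J := Jmat n with hJ
  have hJS : J * Sᴴ = S * J := by
    rw [conjTranspose_mul, hJ, Jh] at hS
    rw [neg_mul] at hS
    exact neg_injective hS
  have e1 : (S * J) * (K * J) = J * (Sᴴ * (K * J)) := by
    rw [← mul_assoc J Sᴴ (K * J), hJS]
  have e2 : (Sᴴ * (K * J)) * J = -(Sᴴ * K) := by
    rw [mul_assoc, mul_assoc, JJ]
    simp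
  have h1 : Matrix.trace ((S * J) * (K * J)) = -Matrix.trace (Sᴴ * K) := by
    rw [e1, Matrix.trace_mul_comm, e2, Matrix.trace_neg]
  have h2 : star (Matrix.trace ((S * J) * (K * J))) = -Matrix.trace ((S * J) * (K * J)) := by
    have h3 : star (Matrix.trace ((S * J) * (K * J)))
        = Matrix.trace (((S * J) * (K * J))ᴴ) := (Matrix.trace_conjTranspose _).symm
    rw [conjTranspose_mul, hK, hS] at h3
    rw [h3, Matrix.mul_neg, Matrix.trace_neg, Matrix.trace_mul_comm]
  have hzre : (Matrix.trace ((S * J) * (K * J))).re = 0 := by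
    have := congrArg Complex.re h2
    simp only [Complex.star_def, Complex.conj_re, Complex.neg_re] at this
    linarith
  have h4 : (Matrix.trace (Sᴴ * K)).re = -(Matrix.trace ((S * J) * (K * J))).re := by
    rw [h1]; simp
  rw [h4, hzre, neg_zero]

private lemma star_half : star (1/2 : ℂ) = 1/2 := by norm_num

private lemma hamProj_isHam {n : ℕ} (M : Matrix (Fin n ⊕ Fin n) (Fin n ⊕ Fin n) ℂ) :
    IsHamiltonian (hamProj M) := by
  unfold IsHamiltonian hamProj
  rw [Matrix.smul_mul, Matrix.add_mul, mul_assoc, mul_assoc, JJ]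
  rw [conjTranspose_smul, conjTranspose_add, conjTranspose_mul, Jh, star_half]
  simp only [conjTranspose_neg, Matrix.mul_neg, Matrix.mul_one, conjTranspose_mul,
    conjTranspose_conjTranspose, Jh, Matrix.neg_mul, neg_neg]
  module

private lemma resid_mul_J {n : ℕ} (M : Matrix (Fin n ⊕ Fin n) (Fin n ⊕ Fin n) ℂ) :
    (M - hamProj M) * Jmat n = (1/2 : ℂ) • (M * Jmat n + Jmat n * Mᴴ) := by
  unfold hamProj
  rw [Matrix.sub_mul, Matrix.smul_mul, Matrix.add_mul, mul_assoc (Jmat n * Mᴴ), JJ]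
  simp only [Matrix.mul_neg, Matrix.mul_one]
  module

private lemma resid_skew {n : ℕ} (M : Matrix (Fin n ⊕ Fin n) (Fin n ⊕ Fin n) ℂ) :
    ((M - hamProj M) * Jmat n)ᴴ = -((M - hamProj M) * Jmat n) := by
  rw [resid_mul_J, conjTranspose_smul, conjTranspose_add, conjTranspose_mul, conjTranspose_mul,
    Jh, conjTranspose_conjTranspose, star_half]
  simp only [Matrix.mul_neg, Matrix.neg_mul]
  module

/-- For any matrix `M ∈ ℂ^{2n×2n}`, the matrix `M|_H = (1/2)(M + J Mᴴ J)` is Hamiltonian and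
is the unique closest Hamiltonian matrix to `M` in the Frobenius norm. -/
theorem closest_hamiltonian (n : ℕ) (M : Matrix (Fin n ⊕ Fin n) (Fin n ⊕ Fin n) ℂ) :
    IsHamiltonian (hamProj M) ∧
    ∀ Q : Matrix (Fin n ⊕ Fin n) (Fin n ⊕ Fin n) ℂ, IsHamiltonian Q →
      frobNorm (M - hamProj M) ≤ frobNorm (M - Q) ∧
      (frobNorm (M - hamProj M) = frobNorm (M - Q) → Q = hamProj M) := by
  refine ⟨hamProj_isHam M, fun Q hQ => ?_⟩
  set P := hamProj M with hP
  have hKherm : ((P - Q) * Jmat n)ᴴ = (P - Q) * Jmat n := by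
    rw [Matrix.sub_mul, conjTranspose_sub, ← (hamProj_isHam M), ← hQ]
  have hcross : (Matrix.trace ((M - P)ᴴ * (P - Q))).re = 0 :=
    cross_zero (M - P) (P - Q) (resid_skew M) hKherm
  have hpyth : gsum (M - Q) = gsum (M - P) + gsum (P - Q) := by
    have : M - Q = (M - P) + (P - Q) := by abel
    rw [this, gsum_add, hcross]
    ring
  have hle : gsum (M - P) ≤ gsum (M - Q) := by
    rw [hpyth]; linarith [gsum_nonneg (P - Q)]
  have hfrob : ∀ X : Matrix (Fin n ⊕ Fin n) (Fin n ⊕ Fin n) ℂ,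
      frobNorm X = Real.sqrt (gsum X) := fun X => rfl
  constructor
  · rw [hfrob, hfrob]
    exact Real.sqrt_le_sqrt hle
  · intro heq
    rw [hfrob, hfrob] at heq
    have hg : gsum (M - P) = gsum (M - Q) :=
      (Real.sqrt_inj (gsum_nonneg _) (gsum_nonneg _)).mp heq
    have hz : gsum (P - Q) = 0 := by linarith [hpyth, hg]
    have hPQ : P - Q = 0 := by
      ext i j
      have h1 : ∀ i ∈ (Finset.univ : Finset (Fin n ⊕ Fin n)),
          (0:ℝ) ≤ ∑ j, ‖(P - Q) i j‖ ^ 2 :=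
        fun _ _ => Finset.sum_nonneg fun _ _ => sq_nonneg _
      have h2 := (Finset.sum_eq_zero_iff_of_nonneg h1).mp hz i (Finset.mem_univ i)
      have h3 := (Finset.sum_eq_zero_iff_of_nonneg
        (fun j _ => sq_nonneg ‖(P - Q) i j‖)).mp h2 j (Finset.mem_univ j)
      have : ‖(P - Q) i j‖ = 0 := by
        nlinarith [norm_nonneg ((P - Q) i j)]
      simpa using norm_eq_zero.mp this
    have : P = Q := by
      have := sub_eq_zero.mp hPQ
      exact this
    exact this.symm
end

section
/- Let x, y ∈ ℂⁿ, let P denote the diagonal-averaging map onto Toeplitz matrices (P(M)_{ij} is the arithmetic mean of the entries of M on the diagonal through (i,j)). Then for every Toeplitz matrix E ∈ ℂ^{n×n} with ‖E‖_F ≤ 1 one has |y^H E x| ≤ ‖P(y x^H)‖_F; moreover, if P(y x^H) ≠ 0 then for any unimodular η ∈ ℂ the Toeplitz matrix E = η P(y x^H)/‖P(y x^H)‖_F satisfies ‖E‖_F = 1 and |y^H E x| = ‖P(y x^H)‖_F. -/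
open Matrix

/-- A matrix is Toeplitz if its entries are constant along diagonals, i.e. the `(i,j)` entry
depends only on `j − i`. -/
def IsToeplitz {n : ℕ} (T : Matrix (Fin n) (Fin n) ℂ) : Prop :=
  ∀ i j k l : Fin n, (j : ℤ) - (i : ℤ) = (l : ℤ) - (k : ℤ) → T i j = T k l

/-- The diagonal-averaging map onto Toeplitz matrices: each entry is replaced by the
arithmetic mean of the entries on the same diagonal. -/
noncomputable def toepProj {n : ℕ} (M : Matrix (Fin n) (Fin n) ℂ) : Matrix (Fin n) (Fin n) ℂ :=
  fun i j =>
    (∑ p ∈ Finset.univ.filter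
        (fun p : Fin n × Fin n => (p.2 : ℤ) - (p.1 : ℤ) = (j : ℤ) - (i : ℤ)), M p.1 p.2) /
      ((Finset.univ.filter
        (fun p : Fin n × Fin n => (p.2 : ℤ) - (p.1 : ℤ) = (j : ℤ) - (i : ℤ))).card : ℂ)


/-- The Euclidean norm of a vector in ℂⁿ. -/
noncomputable def euclNorm {n : ℕ} (x : Fin n → ℂ) : ℝ :=
  Real.sqrt (∑ i, ‖x i‖ ^ 2)

/-! ### Auxiliary lemmas -/

def diagSet (n : ℕ) (d : ℤ) : Finset (Fin n × Fin n) :=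
  Finset.univ.filter (fun p : Fin n × Fin n => (p.2 : ℤ) - (p.1 : ℤ) = d)

lemma toepProj_apply {n : ℕ} (M : Matrix (Fin n) (Fin n) ℂ) (i j : Fin n) :
    toepProj M i j = (∑ p ∈ diagSet n ((j:ℤ)-(i:ℤ)), M p.1 p.2) /
      ((diagSet n ((j:ℤ)-(i:ℤ))).card : ℂ) := rfl

lemma sum_toep_avg {n : ℕ} (E : Matrix (Fin n) (Fin n) ℂ) (hE : IsToeplitz E)
    (g : Fin n × Fin n → ℂ) :
    ∑ q : Fin n × Fin n, E q.1 q.2 *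
        ((∑ p ∈ diagSet n ((q.2:ℤ)-(q.1:ℤ)), g p) / ((diagSet n ((q.2:ℤ)-(q.1:ℤ))).card : ℂ))
      = ∑ q : Fin n × Fin n, E q.1 q.2 * g q := by
  have hmaps : ∀ q ∈ (Finset.univ : Finset (Fin n × Fin n)),
      ((q.2:ℤ)-(q.1:ℤ)) ∈ Finset.image (fun q : Fin n × Fin n => (q.2:ℤ)-(q.1:ℤ)) Finset.univ :=
    fun q _ => Finset.mem_image_of_mem _ (Finset.mem_univ q)
  rw [← Finset.sum_fiberwise_of_maps_to hmaps, ← Finset.sum_fiberwise_of_maps_to hmaps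
    (fun q : Fin n × Fin n => E q.1 q.2 * g q)]
  refine Finset.sum_congr rfl fun d _ => ?_
  have hfib : Finset.univ.filter (fun q : Fin n × Fin n => (q.2:ℤ)-(q.1:ℤ) = d) = diagSet n d := rfl
  rw [hfib]
  rcases (diagSet n d).eq_empty_or_nonempty with h | ⟨q0, hq0⟩
  · simp [h]
  · have hconst : ∀ q ∈ diagSet n d, E q.1 q.2 = E q0.1 q0.2 := by
      intro q hq
      apply hE
      have h1 : (q.2:ℤ)-(q.1:ℤ) = d := (Finset.mem_filter.1 hq).2
      have h2 : (q0.2:ℤ)-(q0.1:ℤ) = d := (Finset.mem_filter.1 hq0).2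
      rw [h1, h2]
    have hc : ((diagSet n d).card : ℂ) ≠ 0 := by
      exact_mod_cast Nat.cast_ne_zero.2 (Finset.card_ne_zero_of_mem hq0)
    calc ∑ q ∈ diagSet n d, E q.1 q.2 *
          ((∑ p ∈ diagSet n ((q.2:ℤ)-(q.1:ℤ)), g p) / ((diagSet n ((q.2:ℤ)-(q.1:ℤ))).card : ℂ))
        = ∑ q ∈ diagSet n d, E q0.1 q0.2 *
          ((∑ p ∈ diagSet n d, g p) / ((diagSet n d).card : ℂ)) := by
          refine Finset.sum_congr rfl fun q hq => ?_
          rw [hconst q hq, (Finset.mem_filter.1 hq).2]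
      _ = ∑ q ∈ diagSet n d, E q.1 q.2 * g q := by
          have hr : ∑ q ∈ diagSet n d, E q.1 q.2 * g q
              = E q0.1 q0.2 * ∑ q ∈ diagSet n d, g q := by
            rw [Finset.mul_sum]
            exact Finset.sum_congr rfl fun q hq => by rw [hconst q hq]
          rw [hr, Finset.sum_const, nsmul_eq_mul]
          field_simp

lemma conj_toepProj {n : ℕ} (M : Matrix (Fin n) (Fin n) ℂ) (i j : Fin n) :
    (starRingEnd ℂ) (toepProj M i j)
      = (∑ p ∈ diagSet n ((j:ℤ)-(i:ℤ)), (starRingEnd ℂ) (M p.1 p.2)) /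
        ((diagSet n ((j:ℤ)-(i:ℤ))).card : ℂ) := by
  rw [toepProj_apply, map_div₀, map_sum, map_natCast]

lemma key_eq {n : ℕ} (x y : Fin n → ℂ) (E : Matrix (Fin n) (Fin n) ℂ) (hE : IsToeplitz E) :
    star y ⬝ᵥ (E *ᵥ x) =
      ∑ q : Fin n × Fin n, E q.1 q.2 *
        (starRingEnd ℂ) (toepProj (Matrix.vecMulVec y (star x)) q.1 q.2) := by
  have h1 : star y ⬝ᵥ (E *ᵥ x) =
      ∑ q : Fin n × Fin n, E q.1 q.2 *
        (starRingEnd ℂ) ((Matrix.vecMulVec y (star x)) q.1 q.2) := by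
    rw [show star y ⬝ᵥ (E *ᵥ x) = ∑ i, ∑ j, (starRingEnd ℂ) (y i) * (E i j * x j) by
      simp [dotProduct, mulVec, Finset.mul_sum]]
    rw [Fintype.sum_prod_type]
    refine Finset.sum_congr rfl fun i _ => Finset.sum_congr rfl fun j _ => ?_
    simp only [Matrix.vecMulVec_apply, Pi.star_apply, _root_.map_mul, Complex.star_def,
      Complex.conj_conj]
    ring
  rw [h1, ← sum_toep_avg E hE (fun p => (starRingEnd ℂ) ((Matrix.vecMulVec y (star x)) p.1 p.2))]
  exact Fintype.sum_congr _ _ fun q => by rw [conj_toepProj]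

lemma frobNorm_prod' {n : ℕ} (M : Matrix (Fin n) (Fin n) ℂ) :
    frobNorm M = Real.sqrt (∑ q : Fin n × Fin n, ‖M q.1 q.2‖ ^ 2) := by
  rw [frobNorm]
  congr 1
  rw [Fintype.sum_prod_type]

lemma frobNorm_prod {n : ℕ} (M : Matrix (Fin n) (Fin n) ℂ) :
    frobNorm M = Real.sqrt (∑ q : Fin n × Fin n, ‖M q.1 q.2‖ ^ 2) := by
  rw [frobNorm_prod']



lemma frobNorm_nonneg {n : ℕ} (M : Matrix (Fin n) (Fin n) ℂ) : 0 ≤ frobNorm M :=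
  Real.sqrt_nonneg _

lemma toepProj_isToeplitz {n : ℕ} (M : Matrix (Fin n) (Fin n) ℂ) :
    IsToeplitz (toepProj M) := by
  intro i j k l h
  simp only [toepProj_apply, h]


lemma part1_abstract {n : ℕ} (P E : Matrix (Fin n) (Fin n) ℂ)
    (hval : ∀ q : Fin n × Fin n, True) (hEnorm : frobNorm E ≤ 1) :
    ‖∑ q : Fin n × Fin n, E q.1 q.2 * (starRingEnd ℂ) (P q.1 q.2)‖ ≤ frobNorm P := by
  calc ‖∑ q : Fin n × Fin n, E q.1 q.2 * (starRingEnd ℂ) (P q.1 q.2)‖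
      ≤ ∑ q : Fin n × Fin n, ‖E q.1 q.2 * (starRingEnd ℂ) (P q.1 q.2)‖ := norm_sum_le _ _
    _ = ∑ q : Fin n × Fin n, ‖E q.1 q.2‖ * ‖P q.1 q.2‖ := by
        refine Fintype.sum_congr _ _ fun q => ?_
        rw [norm_mul, RCLike.norm_conj]
    _ ≤ Real.sqrt (∑ q : Fin n × Fin n, ‖E q.1 q.2‖ ^ 2) *
          Real.sqrt (∑ q : Fin n × Fin n, ‖P q.1 q.2‖ ^ 2) :=
        Real.sum_mul_le_sqrt_mul_sqrt _ _ _
    _ = frobNorm E * frobNorm P := by rw [← frobNorm_prod, ← frobNorm_prod]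
    _ ≤ 1 * frobNorm P := mul_le_mul_of_nonneg_right hEnorm (frobNorm_nonneg _)
    _ = frobNorm P := one_mul _

lemma frobNorm_pos {n : ℕ} (P : Matrix (Fin n) (Fin n) ℂ) (hP : P ≠ 0) : 0 < frobNorm P := by
  obtain ⟨i, j, hij⟩ : ∃ i j, P i j ≠ 0 := by
    by_contra h
    push_neg at h
    exact hP (by ext i j; exact h i j)
  rw [frobNorm_prod, Real.sqrt_pos]
  have h1 : (0:ℝ) < ‖P i j‖ ^ 2 := pow_pos (norm_pos_iff.2 hij) 2
  have h2 : ‖P i j‖ ^ 2 ≤ ∑ q : Fin n × Fin n, ‖P q.1 q.2‖ ^ 2 :=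
    Finset.single_le_sum (f := fun q : Fin n × Fin n => ‖P q.1 q.2‖ ^ 2)
      (fun q _ => by positivity) (Finset.mem_univ (i, j))
  linarith

lemma frobNorm_smul {n : ℕ} (c : ℂ) (P : Matrix (Fin n) (Fin n) ℂ) :
    frobNorm (c • P) = ‖c‖ * frobNorm P := by
  rw [frobNorm_prod, frobNorm_prod]
  have h : (∑ q : Fin n × Fin n, ‖(c • P) q.1 q.2‖ ^ 2)
      = ‖c‖ ^ 2 * ∑ q : Fin n × Fin n, ‖P q.1 q.2‖ ^ 2 := by
    rw [Finset.mul_sum]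
    refine Fintype.sum_congr _ _ fun q => ?_
    simp [Matrix.smul_apply, norm_mul, mul_pow]
  rw [h, Real.sqrt_mul (by positivity), Real.sqrt_sq (norm_nonneg _)]

lemma sum_smul_conj {n : ℕ} (c : ℂ) (P : Matrix (Fin n) (Fin n) ℂ) :
    ∑ q : Fin n × Fin n, (c • P) q.1 q.2 * (starRingEnd ℂ) (P q.1 q.2)
      = c * ((∑ q : Fin n × Fin n, ‖P q.1 q.2‖ ^ 2 : ℝ) : ℂ) := by
  push_cast
  rw [Finset.mul_sum]
  refine Fintype.sum_congr _ _ fun q => ?_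
  simp only [Matrix.smul_apply, smul_eq_mul]
  rw [mul_assoc, Complex.mul_conj']

set_option maxHeartbeats 1000000 in
/-- For every Toeplitz matrix `E` with `‖E‖_F ≤ 1`, `|yᴴ E x| ≤ ‖P(y xᴴ)‖_F`; moreover if
`P(y xᴴ) ≠ 0` then the normalized projected Wilkinson perturbation
`E = η P(y xᴴ)/‖P(y xᴴ)‖_F` is a Toeplitz matrix of unit Frobenius norm attaining the bound. -/
theorem toeplitz_wilkinson_maximal (n : ℕ) (x y : Fin n → ℂ) :
    (∀ E : Matrix (Fin n) (Fin n) ℂ, IsToeplitz E → frobNorm E ≤ 1 →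
      ‖star y ⬝ᵥ (E *ᵥ x)‖ ≤ frobNorm (toepProj (Matrix.vecMulVec y (star x)))) ∧
    (toepProj (Matrix.vecMulVec y (star x)) ≠ 0 →
      ∀ η : ℂ, ‖η‖ = 1 →
        IsToeplitz (η • ((frobNorm (toepProj (Matrix.vecMulVec y (star x))) : ℂ)⁻¹ •
            toepProj (Matrix.vecMulVec y (star x)))) ∧
        frobNorm (η • ((frobNorm (toepProj (Matrix.vecMulVec y (star x))) : ℂ)⁻¹ •
            toepProj (Matrix.vecMulVec y (star x)))) = 1 ∧
        ‖star y ⬝ᵥ ((η • ((frobNorm (toepProj (Matrix.vecMulVec y (star x))) : ℂ)⁻¹ •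
            toepProj (Matrix.vecMulVec y (star x)))) *ᵥ x)‖ =
          frobNorm (toepProj (Matrix.vecMulVec y (star x)))) := by
  set P : Matrix (Fin n) (Fin n) ℂ := toepProj (Matrix.vecMulVec y (star x)) with hPdef
  set f : ℝ := frobNorm P with hfdef
  have hPtoep : IsToeplitz P := toepProj_isToeplitz _
  have hS : (∑ q : Fin n × Fin n, ‖P q.1 q.2‖ ^ 2) = f ^ 2 := by
    rw [hfdef, frobNorm_prod, Real.sq_sqrt]
    positivity
  constructor
  · intro E hE hEnorm
    rw [key_eq x y E hE]
    exact part1_abstract P E (fun _ => trivial) hEnorm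
  · intro hP η hη
    have hfpos : 0 < f := frobNorm_pos P hP
    set c : ℂ := η * (f : ℂ)⁻¹ with hcdef
    have hsmul : η • ((f : ℂ)⁻¹ • P) = c • P := by rw [smul_smul]
    have hEtoep : IsToeplitz (η • ((f : ℂ)⁻¹ • P)) := by
      intro i j k l h
      simp only [Matrix.smul_apply, smul_eq_mul, hPtoep i j k l h]
    have hnc : ‖c‖ = f⁻¹ := by
      rw [hcdef, norm_mul, hη, one_mul, norm_inv, Complex.norm_real,
        Real.norm_of_nonneg hfpos.le]
    refine ⟨hEtoep, ?_, ?_⟩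
    · rw [hsmul, frobNorm_smul, hnc]
      field_simp
      exact hfdef.symm
    · rw [hsmul, key_eq x y (c • P) (by rw [← hsmul]; exact hEtoep), sum_smul_conj, hS,
        norm_mul, hnc, Complex.norm_real, Real.norm_of_nonneg (by positivity), sq]
      field_simp
end

section
/- Let A, E ∈ ℂ^{n×n}, and let λ : ℝ → ℂ and v : ℝ → ℂⁿ be functions differentiable at 0 such that (A + tE) v(t) = λ(t) v(t) for all t in a neighborhood of 0. Let x := v(0), λ₀ := λ(0), and let y ∈ ℂⁿ satisfy A^H y = conj(λ₀) · y (i.e. y is a left eigenvector of A for λ₀) and y^H x ≠ 0. Then the derivative of λ at 0 equals (y^H E x)/(y^H x). -/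
open Matrix

/-- First-order eigenvalue perturbation (Wilkinson): if `(A + tE) v(t) = λ(t) v(t)` near
`t = 0`, with `λ`, `v` differentiable at `0`, `x = v(0)`, and `y` a left eigenvector of `A`
for `λ(0)` with `yᴴ x ≠ 0`, then `λ'(0) = (yᴴ E x)/(yᴴ x)`. -/
theorem eigenvalue_derivative (n : ℕ) (A E : Matrix (Fin n) (Fin n) ℂ)
    (lam : ℝ → ℂ) (v : ℝ → Fin n → ℂ)
    (hlam : DifferentiableAt ℝ lam 0) (hv : DifferentiableAt ℝ v 0)
    (heig : ∀ᶠ t in nhds (0 : ℝ), (A + t • E) *ᵥ v t = lam t • v t)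
    (x : Fin n → ℂ) (hx : x = v 0)
    (y : Fin n → ℂ) (hy : Aᴴ *ᵥ y = (starRingEnd ℂ) (lam 0) • y)
    (hyx : star y ⬝ᵥ x ≠ 0) :
    deriv lam 0 = (star y ⬝ᵥ (E *ᵥ x)) / (star y ⬝ᵥ x) := by
  set g : ℝ → ℂ := fun t => star y ⬝ᵥ v t with hg_def
  set h : ℝ → ℂ := fun t => star y ⬝ᵥ (E *ᵥ v t) with hh_def
  have hvi : ∀ i, DifferentiableAt ℝ (fun t => v t i) 0 :=
    fun i => (differentiableAt_pi.mp hv) i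
  have hg : DifferentiableAt ℝ g 0 := by
    simp only [hg_def, dotProduct]
    exact DifferentiableAt.fun_sum fun i _ => (hvi i).const_mul _
  have hh : DifferentiableAt ℝ h 0 := by
    simp only [hh_def, dotProduct, mulVec]
    exact DifferentiableAt.fun_sum fun i _ =>
      (DifferentiableAt.fun_sum fun j _ => (hvi j).const_mul _).const_mul _
  -- left eigenvector identity
  have key : ∀ w : Fin n → ℂ, star y ⬝ᵥ (A *ᵥ w) = lam 0 * (star y ⬝ᵥ w) := by
    intro w
    rw [dotProduct_mulVec]
    have : star y ᵥ* A = lam 0 • star y := by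
      have h1 : star (Aᴴ *ᵥ y) = star y ᵥ* A := by
        rw [star_mulVec, conjTranspose_conjTranspose]
      rw [← h1, hy, star_smul]
      simp
    rw [this, smul_dotProduct, smul_eq_mul]
  set F : ℝ → ℂ := fun t => (lam t - lam 0) * g t - (t : ℂ) * h t with hF_def
  have hF0 : F =ᶠ[nhds (0:ℝ)] fun _ => 0 := by
    filter_upwards [heig] with t ht
    have h1 : star y ⬝ᵥ ((A + t • E) *ᵥ v t) = lam t * g t := by
      rw [ht]
      simp [hg_def, dotProduct_smul]
    have h2 : star y ⬝ᵥ ((A + t • E) *ᵥ v t) = lam 0 * g t + (t:ℂ) * h t := by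
      rw [add_mulVec, dotProduct_add, key]
      congr 1
      rw [smul_mulVec, dotProduct_smul]
      simp [Complex.real_smul, hh_def]
    simp only [hF_def]
    rw [h1] at h2
    linear_combination h2
  have hd1 : HasDerivAt (fun t => (lam t - lam 0) * g t) (deriv lam 0 * g 0) 0 := by
    have := (hlam.hasDerivAt.sub_const (lam 0)).fun_mul hg.hasDerivAt
    simpa using this
  have hd2 : HasDerivAt (fun t : ℝ => (t : ℂ) * h t) (h 0) 0 := by
    have hcoe : HasDerivAt (fun t : ℝ => (t : ℂ)) 1 0 := by
      simpa using (hasDerivAt_id (0:ℝ)).ofReal_comp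
    have := hcoe.fun_mul hh.hasDerivAt
    simpa using this
  have hF' : HasDerivAt F (deriv lam 0 * g 0 - h 0) 0 := hd1.sub hd2
  have hzero : deriv lam 0 * g 0 - h 0 = 0 := by
    rw [← hF'.deriv]
    rw [Filter.EventuallyEq.deriv_eq hF0]
    simp
  have hg0 : g 0 = star y ⬝ᵥ x := by rw [hg_def, hx]
  have hh0 : h 0 = star y ⬝ᵥ (E *ᵥ x) := by rw [hh_def, hx]
  rw [hg0, hh0] at hzero
  rw [eq_div_iff hyx]
  linear_combination hzero
end

section
/- Let A ∈ ℂ^{n×n} be a Toeplitz matrix, E ∈ ℂ^{n×n} a Toeplitz matrix with ‖E‖_F = 1, and let λ : ℝ → ℂ, v : ℝ → ℂⁿ be differentiable at 0 with (A + tE) v(t) = λ(t) v(t) near t = 0. Set x := v(0) with ‖x‖₂ = 1 and suppose y ∈ ℂⁿ with ‖y‖₂ = 1 satisfies A^H y = conj(λ(0)) · y and y^H x ≠ 0. Then |λ'(0)| ≤ ‖P(y x^H)‖_F / |y^H x|, where P is the diagonal-averaging map onto Toeplitz matrices. -/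
open Matrix

lemma frob_cs {n : ℕ} (M N : Matrix (Fin n) (Fin n) ℂ) :
    ‖∑ p : Fin n × Fin n, (starRingEnd ℂ) (M p.1 p.2) * N p.1 p.2‖ ≤ frobNorm M * frobNorm N := by
  classical
  let f : EuclideanSpace ℂ (Fin n × Fin n) := (WithLp.equiv 2 _).symm (fun p => M p.1 p.2)
  let g : EuclideanSpace ℂ (Fin n × Fin n) := (WithLp.equiv 2 _).symm (fun p => N p.1 p.2)
  have h1 : (inner ℂ f g : ℂ) = ∑ p : Fin n × Fin n, (starRingEnd ℂ) (M p.1 p.2) * N p.1 p.2 := by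
    simp [PiLp.inner_apply, RCLike.inner_apply, f, g]
    exact Finset.sum_congr rfl (fun _ _ => mul_comm _ _)
  have h2 : ‖f‖ = frobNorm M := by
    rw [EuclideanSpace.norm_eq, frobNorm]
    congr 1
    exact Fintype.sum_prod_type (fun p : Fin n × Fin n => ‖M p.1 p.2‖ ^ 2)
  have h3 : ‖g‖ = frobNorm N := by
    rw [EuclideanSpace.norm_eq, frobNorm]
    congr 1
    exact Fintype.sum_prod_type (fun p : Fin n × Fin n => ‖N p.1 p.2‖ ^ 2)
  rw [← h1, ← h2, ← h3]
  exact norm_inner_le_norm f g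

lemma sum_proj_eq {n : ℕ} (M N : Matrix (Fin n) (Fin n) ℂ) (hN : IsToeplitz N) :
    ∑ p : Fin n × Fin n, (starRingEnd ℂ) (toepProj M p.1 p.2) * N p.1 p.2
      = ∑ p : Fin n × Fin n, (starRingEnd ℂ) (M p.1 p.2) * N p.1 p.2 := by
  classical
  set g : Fin n × Fin n → ℤ := fun p => (p.2 : ℤ) - (p.1 : ℤ) with hg
  set t := (Finset.univ : Finset (Fin n × Fin n)).image g with ht
  have hmaps : ∀ p ∈ (Finset.univ : Finset (Fin n × Fin n)), g p ∈ t :=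
    fun p _ => Finset.mem_image_of_mem g (Finset.mem_univ p)
  rw [← Finset.sum_fiberwise_of_maps_to hmaps
        (fun p => (starRingEnd ℂ) (toepProj M p.1 p.2) * N p.1 p.2),
      ← Finset.sum_fiberwise_of_maps_to hmaps
        (fun p => (starRingEnd ℂ) (M p.1 p.2) * N p.1 p.2)]
  refine Finset.sum_congr rfl (fun d hd => ?_)
  obtain ⟨p₀, -, hp₀⟩ := Finset.mem_image.mp hd
  set fib := Finset.univ.filter (fun p : Fin n × Fin n => g p = d) with hfib
  have hp₀fib : p₀ ∈ fib := by simp [hfib, hp₀]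
  have hNc : ∀ p ∈ fib, N p.1 p.2 = N p₀.1 p₀.2 := by
    intro p hp
    have hpd : g p = d := (Finset.mem_filter.mp hp).2
    exact hN p.1 p.2 p₀.1 p₀.2 (hpd.trans hp₀.symm)
  have hPc : ∀ p ∈ fib, toepProj M p.1 p.2 =
      (∑ q ∈ fib, M q.1 q.2) / (fib.card : ℂ) := by
    intro p hp
    have hpd : g p = d := (Finset.mem_filter.mp hp).2
    have : Finset.univ.filter
        (fun q : Fin n × Fin n => (q.2 : ℤ) - (q.1 : ℤ) = (p.2 : ℤ) - (p.1 : ℤ)) = fib := by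
      rw [hfib]
      congr 1
      funext q
      simp only [hg]
      rw [show (p.2 : ℤ) - (p.1 : ℤ) = d from hpd]
    rw [toepProj, this]
  have hcard : (fib.card : ℂ) ≠ 0 := by
    have : 0 < fib.card := Finset.card_pos.mpr ⟨p₀, hp₀fib⟩
    exact_mod_cast Nat.cast_ne_zero.mpr this.ne'
  calc ∑ p ∈ fib, (starRingEnd ℂ) (toepProj M p.1 p.2) * N p.1 p.2
      = ∑ p ∈ fib, (starRingEnd ℂ) ((∑ q ∈ fib, M q.1 q.2) / (fib.card : ℂ)) * N p₀.1 p₀.2 := by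
        refine Finset.sum_congr rfl (fun p hp => ?_)
        rw [hPc p hp, hNc p hp]
    _ = (fib.card : ℂ) * ((starRingEnd ℂ) ((∑ q ∈ fib, M q.1 q.2) / (fib.card : ℂ)) * N p₀.1 p₀.2) := by
        rw [Finset.sum_const, nsmul_eq_mul]
    _ = (starRingEnd ℂ) (∑ q ∈ fib, M q.1 q.2) * N p₀.1 p₀.2 := by
        rw [map_div₀]
        have : (starRingEnd ℂ) ((fib.card : ℂ)) = (fib.card : ℂ) := by simp
        rw [this]
        field_simp
    _ = ∑ p ∈ fib, (starRingEnd ℂ) (M p.1 p.2) * N p.1 p.2 := by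
        rw [map_sum, Finset.sum_mul]
        exact Finset.sum_congr rfl (fun p hp => by rw [hNc p hp])

/-- Structured eigenvalue sensitivity for Toeplitz matrices: under a unit-norm Toeplitz
perturbation, `|λ'(0)| ≤ ‖P(y xᴴ)‖_F / |yᴴ x|` (the Toeplitz structured condition number). -/
theorem toeplitz_structured_condition_bound (n : ℕ) (A E : Matrix (Fin n) (Fin n) ℂ)
    (hA : IsToeplitz A) (hE : IsToeplitz E) (hEn : frobNorm E = 1)
    (lam : ℝ → ℂ) (v : ℝ → Fin n → ℂ)
    (hlam : DifferentiableAt ℝ lam 0) (hv : DifferentiableAt ℝ v 0)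
    (heig : ∀ᶠ t in nhds (0 : ℝ), (A + t • E) *ᵥ v t = lam t • v t)
    (x : Fin n → ℂ) (hx : x = v 0) (hxn : euclNorm x = 1)
    (y : Fin n → ℂ) (hyn : euclNorm y = 1)
    (hy : Aᴴ *ᵥ y = (starRingEnd ℂ) (lam 0) • y)
    (hyx : star y ⬝ᵥ x ≠ 0) :
    ‖deriv lam 0‖ ≤
      frobNorm (toepProj (Matrix.vecMulVec y (star x))) / ‖star y ⬝ᵥ x‖ := by
  classical
  set c : ℝ → ℂ := fun t => star y ⬝ᵥ v t with hc_def
  set h : ℝ → ℂ := fun t => star y ⬝ᵥ (E *ᵥ v t) with hh_def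
  have hvi : ∀ i, DifferentiableAt ℝ (fun t => v t i) 0 := differentiableAt_pi.mp hv
  have hc : DifferentiableAt ℝ c 0 := by
    show DifferentiableAt ℝ (fun t => ∑ i, star y i * v t i) 0
    exact DifferentiableAt.fun_sum (fun i _ => ((hvi i).const_mul _))
  have hh : DifferentiableAt ℝ h 0 := by
    show DifferentiableAt ℝ (fun t => ∑ i, star y i * ∑ j, E i j * v t j) 0
    exact DifferentiableAt.fun_sum (fun i _ =>
      (DifferentiableAt.fun_sum (fun j _ => ((hvi j).const_mul _))).const_mul _)
  -- star y ᵥ* A = lam 0 • star y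
  have hyA : star y ᵥ* A = lam 0 • star y := by
    have h1 := congrArg star hy
    rw [star_mulVec, conjTranspose_conjTranspose, star_smul] at h1
    simpa using h1
  have hfun_eq : (fun t : ℝ => lam 0 * c t + (t : ℂ) * h t) =ᶠ[nhds (0 : ℝ)]
      (fun t => lam t * c t) := by
    filter_upwards [heig] with t ht
    have e1 : star y ⬝ᵥ ((A + t • E) *ᵥ v t) = lam t * c t := by
      rw [ht, dotProduct_smul, smul_eq_mul]
    have e2 : star y ⬝ᵥ ((A + t • E) *ᵥ v t) = lam 0 * c t + (t : ℂ) * h t := by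
      rw [add_mulVec, dotProduct_add, smul_mulVec, dotProduct_smul]
      congr 1
      rw [dotProduct_mulVec, hyA, smul_dotProduct, smul_eq_mul]
    rw [← e2, e1]
  have hderiv := hfun_eq.deriv_eq
  have hth : DifferentiableAt ℝ (fun t : ℝ => (t : ℂ)) 0 :=
    Complex.ofRealCLM.differentiableAt
  have hL : deriv (fun t : ℝ => lam 0 * c t + (t : ℂ) * h t) 0 = lam 0 * deriv c 0 + h 0 := by
    rw [deriv_fun_add ((hc.const_mul _)) (hth.fun_mul hh), deriv_const_mul _ hc, deriv_fun_mul hth hh]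
    have : deriv (fun t : ℝ => (t : ℂ)) 0 = 1 := by
      have h2 := (Complex.ofRealCLM.hasDerivAt (x := (0:ℝ))).deriv
      rw [show ((Complex.ofRealCLM : ℝ →L[ℝ] ℂ) : ℝ → ℂ) = fun t : ℝ => (t : ℂ) from rfl] at h2
      simpa using h2
    rw [this]
    push_cast
    ring
  have hR : deriv (fun t => lam t * c t) 0 = deriv lam 0 * c 0 + lam 0 * deriv c 0 :=
    deriv_fun_mul hlam hc
  have key : h 0 = deriv lam 0 * c 0 := by
    have := hL.symm.trans (hderiv.trans hR)
    linear_combination this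
  -- rewrite h 0 as an inner product with the rank one matrix
  have hc0 : c 0 = star y ⬝ᵥ x := by rw [hc_def, hx]
  have hh0 : h 0 = ∑ p : Fin n × Fin n,
      (starRingEnd ℂ) ((Matrix.vecMulVec y (star x)) p.1 p.2) * E p.1 p.2 := by
    rw [hh_def, hx]
    show star y ⬝ᵥ (E *ᵥ v 0) = _
    rw [Fintype.sum_prod_type]
    simp only [vecMulVec_apply, Pi.star_apply, _root_.map_mul, dotProduct, mulVec,
      Finset.mul_sum, Complex.star_def, Complex.conj_conj]
    refine Finset.sum_congr rfl (fun i _ => Finset.sum_congr rfl (fun j _ => ?_))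
    ring
  have hbound : ‖h 0‖ ≤ frobNorm (toepProj (Matrix.vecMulVec y (star x))) := by
    rw [hh0, ← sum_proj_eq _ _ hE]
    calc ‖∑ p : Fin n × Fin n, (starRingEnd ℂ)
          (toepProj (Matrix.vecMulVec y (star x)) p.1 p.2) * E p.1 p.2‖
        ≤ frobNorm (toepProj (Matrix.vecMulVec y (star x))) * frobNorm E := frob_cs _ _
      _ = frobNorm (toepProj (Matrix.vecMulVec y (star x))) := by rw [hEn, mul_one]
  have hpos : 0 < ‖star y ⬝ᵥ x‖ := norm_pos_iff.mpr hyx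
  rw [le_div_iff₀ hpos]
  calc ‖deriv lam 0‖ * ‖star y ⬝ᵥ x‖ = ‖deriv lam 0 * (star y ⬝ᵥ x)‖ := (norm_mul _ _).symm
    _ = ‖h 0‖ := by rw [← hc0, ← key]
    _ ≤ _ := hbound
end
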